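/- Let n≥1 be an integer and define Q(u) = (u^{2n}/(1+u^{2n})) e^u − ε. For all sufficiently small ε>0, the second derivative satisfies Q''(u) > 0 for every u in (ln ε, 1+ln ε) ∪ (−2ε^{1/(2n)}, −√ε) ∪ (√ε, ε^{1/(2n)}); in particular Q' is strictly increasing on each of these three intervals. -/

import Mathlib

open Real Set

/-- `Q(u) = u^(2n)/(1+u^(2n)) e^u - ε`. -/
noncomputable def Q (n : ℕ) (ε u : ℝ) : ℝ :=
  u ^ (2 * n) / (1 + u ^ (2 * n)) * Real.exp u - ε

/-- First derivative of `Q (k+1) ε`. -/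
noncomputable def D1 (k : ℕ) (u : ℝ) : ℝ :=
  (u ^ (2*k+2) * (1 + u ^ (2*k+2)) + (2*(k:ℝ)+2) * u ^ (2*k+1)) * Real.exp u
    / (1 + u ^ (2*k+2)) ^ 2

/-- Second derivative of `Q (k+1) ε`. -/
noncomputable def D2 (k : ℕ) (u : ℝ) : ℝ :=
  u ^ (2*k) *
    (u^2 * (1 + u ^ (2*k+2))^2 + (4*(k:ℝ)+4) * u * (1 + u ^ (2*k+2))
      + (2*(k:ℝ)+2) * ((2*(k:ℝ)+1) - (2*(k:ℝ)+3) * u ^ (2*k+2))) * Real.exp u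
    / (1 + u ^ (2*k+2)) ^ 3

lemma hBpos (k : ℕ) (u : ℝ) : (0:ℝ) < 1 + u ^ (2*k+2) := by
  have h : u ^ (2*k+2) = (u^(k+1))^2 := by rw [← pow_mul]; ring_nf
  rw [h]; positivity

lemma hpow_deriv (k : ℕ) (u : ℝ) :
    HasDerivAt (fun u : ℝ => u ^ (2*k+2)) ((2*(k:ℝ)+2) * u ^ (2*k+1)) u := by
  have := hasDerivAt_pow (2*k+2) u
  have h1 : 2*k+2-1 = 2*k+1 := by omega
  rw [h1] at this
  exact this.congr_deriv (by push_cast; ring)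

lemma hasDerivQ (k : ℕ) (ε : ℝ) (u : ℝ) :
    HasDerivAt (Q (k+1) ε) (D1 k u) u := by
  have hB := hBpos k u
  have h1 := hpow_deriv k u
  have h2 : HasDerivAt (fun u : ℝ => 1 + u ^ (2*k+2)) ((2*(k:ℝ)+2) * u ^ (2*k+1)) u :=
    h1.const_add 1
  have hdiv := h1.div h2 (ne_of_gt hB)
  have hexp := Real.hasDerivAt_exp u
  have h := (hdiv.mul hexp).sub_const ε
  have hQ : Q (k+1) ε = fun u : ℝ =>
      u ^ (2*k+2) / (1 + u ^ (2*k+2)) * Real.exp u - ε := by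
    funext v
    have h3 : 2*(k+1) = 2*k+2 := by ring
    simp only [Q, h3]
  rw [hQ]
  refine h.congr_deriv ?_
  simp only [Pi.div_apply]
  unfold D1
  field_simp
  ring

lemma hasDerivD1 (k : ℕ) (u : ℝ) : HasDerivAt (D1 k) (D2 k u) u := by
  have hB := hBpos k u
  have h1 := hpow_deriv k u
  have h2 : HasDerivAt (fun u : ℝ => 1 + u ^ (2*k+2)) ((2*(k:ℝ)+2) * u ^ (2*k+1)) u :=
    h1.const_add 1
  have h3 : HasDerivAt (fun u : ℝ => u ^ (2*k+1)) ((2*(k:ℝ)+1) * u ^ (2*k)) u := by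
    have := hasDerivAt_pow (2*k+1) u
    have he : 2*k+1-1 = 2*k := by omega
    rw [he] at this
    exact this.congr_deriv (by push_cast; ring)
  have hnum : HasDerivAt
      (fun u : ℝ => (u ^ (2*k+2) * (1 + u ^ (2*k+2)) + (2*(k:ℝ)+2) * u ^ (2*k+1)) * Real.exp u)
      ((( (2*(k:ℝ)+2) * u ^ (2*k+1) * (1 + u ^ (2*k+2))
          + u ^ (2*k+2) * ((2*(k:ℝ)+2) * u ^ (2*k+1)))
         + (2*(k:ℝ)+2) * ((2*(k:ℝ)+1) * u ^ (2*k))) * Real.exp u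
       + (u ^ (2*k+2) * (1 + u ^ (2*k+2)) + (2*(k:ℝ)+2) * u ^ (2*k+1)) * Real.exp u) u :=
    (((h1.mul h2).add (h3.const_mul (2*(k:ℝ)+2))).mul (Real.hasDerivAt_exp u))
  have hden : HasDerivAt (fun u : ℝ => (1 + u ^ (2*k+2)) ^ 2)
      (2 * (1 + u ^ (2*k+2)) ^ 1 * ((2*(k:ℝ)+2) * u ^ (2*k+1))) u := h2.pow 2
  have h := hnum.div hden (pow_ne_zero 2 (ne_of_gt hB))
  have hD1 : D1 k = fun u : ℝ =>
      (u ^ (2*k+2) * (1 + u ^ (2*k+2)) + (2*(k:ℝ)+2) * u ^ (2*k+1)) * Real.exp u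
        / (1 + u ^ (2*k+2)) ^ 2 := rfl
  rw [hD1]
  refine h.congr_deriv ?_
  unfold D2
  rw [div_eq_div_iff (by positivity) (by positivity)]
  ring

lemma D2_pos (k : ℕ) (u : ℝ)
    (h : u ≤ -(8*(k:ℝ)+8) ∨ (u ≠ 0 ∧ |u| ≤ 1/100)) : 0 < D2 k u := by
  have hB := hBpos k u
  have hK : (0:ℝ) ≤ (k:ℝ) := Nat.cast_nonneg k
  have hu0 : u ≠ 0 := by
    rcases h with h | h
    · intro h0; rw [h0] at h; linarith
    · exact h.1
  have hu2 : (0:ℝ) < u ^ 2 := by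
    rcases lt_or_gt_of_ne hu0 with h' | h'
    · positivity
    · positivity
  have hupow : (0:ℝ) < u ^ (2*k) := by
    rw [pow_mul]; exact pow_pos hu2 k
  set g : ℝ := u ^ (2*k+2) with hg
  have hg0 : (0:ℝ) ≤ g := by
    have : g = (u^(k+1))^2 := by rw [hg, ← pow_mul]; ring_nf
    rw [this]; positivity
  have hinner : 0 < u^2 * (1 + g)^2 + (4*(k:ℝ)+4) * u * (1 + g)
      + (2*(k:ℝ)+2) * ((2*(k:ℝ)+1) - (2*(k:ℝ)+3) * g) := by
    rcases h with h | ⟨_, habs⟩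
    · -- large negative u
      have hvneg : u ≤ 0 := by linarith
      have hgu : u^2 ≤ g := by
        rw [hg]
        have h1 : (1:ℝ) ≤ -u := by linarith
        have h2 : u^2 = (-u)^2 := by ring
        have h3 : g = (-u)^(2*k+2) := by
          rw [hg]
          rcases Even.neg_pow (⟨k+1, by ring⟩ : Even (2*k+2)) u with h'
          rw [h']
        rw [h2, ← hg, h3]
        exact pow_le_pow_right₀ h1 (by omega)
      have hB2 : (8*(k:ℝ)+8)^2 ≤ u^2 := by nlinarith
      have c2 : (2*(k:ℝ)+2) * (2*(k:ℝ)+3) * g ≤ u^2 * g := by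
        apply mul_le_mul_of_nonneg_right _ hg0
        nlinarith
      have c3 : 0 ≤ u^2 + (8*(k:ℝ)+8)*u := by nlinarith
      have c4 : 0 ≤ (u^2 + (8*(k:ℝ)+8)*u) * g := mul_nonneg c3 hg0
      have c5 : 0 ≤ (-u) * g * (4*(k:ℝ)+4) :=
        mul_nonneg (mul_nonneg (by linarith) hg0) (by linarith)
      have c6 : 0 ≤ (-u) * (4*(k:ℝ)+4) := mul_nonneg (by linarith) (by linarith)
      nlinarith [sq_nonneg (u*g), sq_nonneg (k:ℝ), c2, c3, c4, c5, c6]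
    · -- small u
      obtain ⟨hul, huu⟩ := abs_le.mp habs
      have h2 : u^2 ≤ 1/10000 := by nlinarith
      have hgle : g ≤ 1/10000 := by
        have hgeq : g = (u^2)^(k+1) := by rw [hg, ← pow_mul]; ring_nf
        have h4 : (u^2)^(k+1) ≤ ((1:ℝ)/10000)^(k+1) :=
          pow_le_pow_left₀ (sq_nonneg u) h2 (k+1)
        have h5 : ((1:ℝ)/10000)^(k+1) ≤ ((1:ℝ)/10000)^1 :=
          pow_le_pow_of_le_one (by norm_num) (by norm_num) (by omega)
        rw [pow_one] at h5
        rw [hgeq]; linarith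
      have f1 : 0 ≤ (1/100 + u) * (1 + g) :=
        mul_nonneg (by linarith) (by linarith)
      have f2 : 0 ≤ (k:ℝ) * ((1/100 + u) * (1 + g)) := mul_nonneg hK f1
      have f3 : 0 ≤ (k:ℝ) * (1/10000 - g) := mul_nonneg hK (by linarith)
      have f4 : 0 ≤ (k:ℝ) * ((k:ℝ) * (1/10000 - g)) := mul_nonneg hK f3
      nlinarith [sq_nonneg u, sq_nonneg (u*(1+g)), sq_nonneg (k:ℝ), f1, f2, f3, f4]
  unfold D2
  rw [← hg]
  have hexp : 0 < Real.exp u := Real.exp_pos u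
  positivity

theorem stmt13 (n : ℕ) (hn : 1 ≤ n) :
    ∃ ε₀ : ℝ, 0 < ε₀ ∧ ∀ ε : ℝ, 0 < ε → ε < ε₀ →
      (∀ u ∈ Set.Ioo (Real.log ε) (1 + Real.log ε) ∪
          Set.Ioo (-2 * ε ^ (1 / (2 * (n : ℝ)))) (-Real.sqrt ε) ∪
          Set.Ioo (Real.sqrt ε) (ε ^ (1 / (2 * (n : ℝ)))),
        0 < deriv (deriv (Q n ε)) u) ∧
      StrictMonoOn (deriv (Q n ε)) (Set.Ioo (Real.log ε) (1 + Real.log ε)) ∧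
      StrictMonoOn (deriv (Q n ε))
        (Set.Ioo (-2 * ε ^ (1 / (2 * (n : ℝ)))) (-Real.sqrt ε)) ∧
      StrictMonoOn (deriv (Q n ε))
        (Set.Ioo (Real.sqrt ε) (ε ^ (1 / (2 * (n : ℝ))))) := by
  obtain ⟨k, rfl⟩ : ∃ k, n = k + 1 := ⟨n - 1, by omega⟩
  refine ⟨min (Real.exp (-(8*(k:ℝ)+9))) ((1/200 : ℝ)^(2*(k+1))),
    lt_min (Real.exp_pos _) (by positivity), ?_⟩
  intro ε hε0 hε
  have hε1 : ε < Real.exp (-(8*(k:ℝ)+9)) := lt_of_lt_of_le hε (min_le_left _ _)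
  have hε2 : ε < (1/200 : ℝ)^(2*(k+1)) := lt_of_lt_of_le hε (min_le_right _ _)
  have hlog : Real.log ε < -(8*(k:ℝ)+9) := by
    have := Real.log_lt_log hε0 hε1
    rwa [Real.log_exp] at this
  have hnR : (0:ℝ) < 2 * (((k+1:ℕ)):ℝ) := by positivity
  have hroot : ε ^ (1 / (2 * (((k+1:ℕ)):ℝ))) < 1/200 := by
    have h1 : ε ^ (1 / (2 * (((k+1:ℕ)):ℝ))) <
        ((1/200 : ℝ)^(2*(k+1))) ^ (1 / (2 * (((k+1:ℕ)):ℝ))) :=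
      Real.rpow_lt_rpow hε0.le hε2 (by positivity)
    have h2 : ((1/200 : ℝ)^(2*(k+1))) ^ (1 / (2 * (((k+1:ℕ)):ℝ))) = 1/200 := by
      rw [← Real.rpow_natCast (1/200 : ℝ) (2*(k+1)), ← Real.rpow_mul (by norm_num)]
      have : ((2*(k+1) : ℕ) : ℝ) * (1 / (2 * (((k+1:ℕ)):ℝ))) = 1 := by
        push_cast
        field_simp
      rw [this, Real.rpow_one]
    rwa [h2] at h1
  have hsqrt : 0 < Real.sqrt ε := Real.sqrt_pos.mpr hε0
  have hd1 : deriv (Q (k+1) ε) = D1 k := funext fun u => (hasDerivQ k ε u).deriv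
  have hd2 : deriv (deriv (Q (k+1) ε)) = fun u => D2 k u := by
    rw [hd1]; exact funext fun u => (hasDerivD1 k u).deriv
  have hmain : ∀ u ∈ Set.Ioo (Real.log ε) (1 + Real.log ε) ∪
      Set.Ioo (-2 * ε ^ (1 / (2 * (((k+1:ℕ)):ℝ)))) (-Real.sqrt ε) ∪
      Set.Ioo (Real.sqrt ε) (ε ^ (1 / (2 * (((k+1:ℕ)):ℝ)))),
      0 < deriv (deriv (Q (k+1) ε)) u := by
    intro u hu
    rw [hd2]
    apply D2_pos
    rcases hu with (hu | hu) | hu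
    · left; have := hu.2; linarith
    · right
      refine ⟨by intro h0; rw [h0] at hu; exact absurd hu.2 (by simpa using hsqrt.le), ?_⟩
      rw [abs_le]
      constructor
      · have := hu.1; nlinarith [hroot, Real.rpow_nonneg hε0.le (1 / (2 * (((k+1:ℕ)):ℝ)))]
      · have := hu.2; nlinarith [hsqrt]
    · right
      refine ⟨by intro h0; rw [h0] at hu; exact absurd hu.1 (by simpa using hsqrt.le), ?_⟩
      rw [abs_le]
      constructor
      · have := hu.1; nlinarith [hsqrt]
      · have := hu.2; linarith [hroot]
  have hdiff : Differentiable ℝ (D1 k) := fun u => (hasDerivD1 k u).differentiableAt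
  have hcont : Continuous (D1 k) := hdiff.continuous
  have hmono : ∀ a b : ℝ, Set.Ioo a b ⊆ (Set.Ioo (Real.log ε) (1 + Real.log ε) ∪
      Set.Ioo (-2 * ε ^ (1 / (2 * (((k+1:ℕ)):ℝ)))) (-Real.sqrt ε) ∪
      Set.Ioo (Real.sqrt ε) (ε ^ (1 / (2 * (((k+1:ℕ)):ℝ))))) →
      StrictMonoOn (deriv (Q (k+1) ε)) (Set.Ioo a b) := by
    intro a b hsub
    apply strictMonoOn_of_deriv_pos (convex_Ioo a b)
    · rw [hd1]; exact hcont.continuousOn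
    · intro x hx
      rw [interior_Ioo] at hx
      exact hmain x (hsub hx)
  exact ⟨hmain, hmono _ _ (fun x hx => Or.inl (Or.inl hx)),
    hmono _ _ (fun x hx => Or.inl (Or.inr hx)),
    hmono _ _ (fun x hx => Or.inr hx)⟩
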